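/- Let a, b, c be integers with 0 < |a| ≤ |b| < |c|. Then ‖(3bc − a, b, c)‖ > ‖(a,b,c)‖ and ‖(a, 3ac − b, c)‖ > ‖(a,b,c)‖, i.e., replacing either of the two smaller entries of the triple by its Vieta image strictly increases the norm. -/
import Mathlib

/-- The norm of an integer triple `(a,b,c)` is `|a| + |b| + |c|`. -/
def tripleNorm (a b c : ℤ) : ℤ := |a| + |b| + |c|

/-- Replacing either of the two smaller entries of a triple `(a,b,c)` with
`0 < |a| ≤ |b| < |c|` by its Vieta image strictly increases the norm. -/
theorem vieta_norm_increase (a b c : ℤ)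
    (h1 : 0 < |a|) (h2 : |a| ≤ |b|) (h3 : |b| < |c|) :
    tripleNorm (3 * b * c - a) b c > tripleNorm a b c ∧
    tripleNorm a (3 * a * c - b) c > tripleNorm a b c := by
  have ha : (1:ℤ) ≤ |a| := h1
  have hb : (1:ℤ) ≤ |b| := le_trans ha h2
  have hc : (2:ℤ) ≤ |c| := by omega
  have h1' : |a| < |3 * b * c - a| := by
    have : 3 * |b| * |c| - |a| ≤ |3 * b * c - a| := by
      have := abs_sub_abs_le_abs_sub (3 * b * c) a
      rw [show |3 * b * c| = 3 * |b| * |c| by rw [abs_mul, abs_mul]; simp] at this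
      linarith
    nlinarith
  have h2' : |b| < |3 * a * c - b| := by
    have : 3 * |a| * |c| - |b| ≤ |3 * a * c - b| := by
      have := abs_sub_abs_le_abs_sub (3 * a * c) b
      rw [show |3 * a * c| = 3 * |a| * |c| by rw [abs_mul, abs_mul]; simp] at this
      linarith
    nlinarith
  constructor <;> simp only [tripleNorm, gt_iff_lt] <;> linarith
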